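/- Three-point property of Bregman divergence: Let h be strictly convex and differentiable on the interior of its domain, D(p,q) = h(p) - h(q) - ⟨∇h(q), p - q⟩ the induced Bregman divergence, C a closed convex set, φ a convex function, and x⁺ = argmin_{u∈C} { φ(u) + D(u,x) } with x⁺ in the interior of dom h. Then for every u ∈ C, φ(x⁺) + D(x⁺, x) ≤ φ(u) + D(u, x) − D(u, x⁺). -/

import Mathlib

open Finset

/-- Three-point property of the Bregman divergence. -/
theorem bregman_three_point {n : ℕ}
    (h : EuclideanSpace ℝ (Fin n) → ℝ)
    (hconv : StrictConvexOn ℝ Set.univ h)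
    (hdiff : Differentiable ℝ h)
    (D : EuclideanSpace ℝ (Fin n) → EuclideanSpace ℝ (Fin n) → ℝ)
    (hD : ∀ p q, D p q = h p - h q - (inner ℝ (gradient h q) (p - q) : ℝ))
    (C : Set (EuclideanSpace ℝ (Fin n))) (hC : Convex ℝ C) (hCclosed : IsClosed C)
    (φ : EuclideanSpace ℝ (Fin n) → ℝ) (hφ : ConvexOn ℝ Set.univ φ)
    (x xplus : EuclideanSpace ℝ (Fin n))
    (hmem : xplus ∈ C)
    (hmin : IsMinOn (fun u => φ u + D u x) C xplus) :
    ∀ u ∈ C, φ xplus + D xplus x ≤ φ u + D u x - D u xplus := by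
  intro u hu
  set v := u - xplus with hv
  -- line through xplus in direction v
  have hc : HasDerivAt (fun t : ℝ => xplus + t • v) v 0 := by
    simpa using ((hasDerivAt_id (0:ℝ)).smul_const v).const_add xplus
  -- derivative of h along the line
  have hgrad : HasFDerivAt h ((InnerProductSpace.toDual ℝ _) (gradient h xplus))
      (xplus + (0:ℝ) • v) := by
    simpa using ((hdiff xplus).hasGradientAt).hasFDerivAt
  have h1 : HasDerivAt (fun t : ℝ => h (xplus + t • v))
      ((inner ℝ (gradient h xplus) v : ℝ)) 0 := by
    have := hgrad.comp_hasDerivAt (x := (0:ℝ)) (f := fun t : ℝ => xplus + t • v) (by simpa using hc)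
    simpa [Function.comp_def, InnerProductSpace.toDual_apply_apply] using this
  have h2 : HasDerivAt (fun t : ℝ => (inner ℝ (gradient h x) (xplus + t • v - x) : ℝ))
      ((inner ℝ (gradient h x) v : ℝ)) 0 := by
    have := (innerSL ℝ (gradient h x)).hasFDerivAt.comp_hasDerivAt (x := (0:ℝ)) (hc.sub_const x)
    simpa only [Function.comp_def, innerSL_apply_apply] using this
  set ψ : ℝ → ℝ := fun t => D (xplus + t • v) x with hψdef
  have hψ : HasDerivAt ψ
      ((inner ℝ (gradient h xplus) v : ℝ) - (inner ℝ (gradient h x) v : ℝ)) 0 := by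
    have := (h1.sub_const (h x)).sub h2
    simpa [hψdef, hD, Pi.sub_def] using this
  -- slope inequality eventually
  have hslope : ∀ᶠ t in nhdsWithin (0:ℝ) (Set.Ioi 0),
      φ xplus - φ u ≤ slope ψ 0 t := by
    filter_upwards [Ioc_mem_nhdsGT_of_mem (by norm_num : (0:ℝ) ∈ Set.Ico (0:ℝ) 1)]
      with t ht
    obtain ⟨ht0, ht1⟩ := ht
    have hcomb : xplus + t • v = (1 - t) • xplus + t • u := by
      rw [hv]; module
    have hxt : xplus + t • v ∈ C := by
      rw [hcomb]
      exact hC hmem hu (by linarith) ht0.le (by ring)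
    have hφt : φ (xplus + t • v) ≤ (1 - t) * φ xplus + t * φ u := by
      rw [hcomb]
      exact hφ.2 (Set.mem_univ xplus) (Set.mem_univ u) (by linarith) ht0.le (by ring)
    have hminle : φ xplus + D xplus x ≤ φ (xplus + t • v) + D (xplus + t • v) x :=
      hmin hxt
    have hψ0 : ψ 0 = D xplus x := by simp [hψdef]
    have key : (φ xplus - φ u) * t ≤ ψ t - ψ 0 := by
      rw [hψ0]; simp only [hψdef]; nlinarith
    rw [slope_def_field, sub_zero, le_div_iff₀ ht0]
    linarith [key]
  have htend : Filter.Tendsto (slope ψ 0) (nhdsWithin (0:ℝ) (Set.Ioi 0))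
      (nhds ((inner ℝ (gradient h xplus) v : ℝ) - (inner ℝ (gradient h x) v : ℝ))) :=
    (hasDerivAt_iff_tendsto_slope.mp hψ).mono_left
      (nhdsWithin_mono _ (fun t ht => ne_of_gt ht))
  have hkey : φ xplus - φ u ≤
      (inner ℝ (gradient h xplus) v : ℝ) - (inner ℝ (gradient h x) v : ℝ) :=
    ge_of_tendsto htend hslope
  rw [hD, hD, hD, hv] at *
  simp only [inner_sub_right] at hkey ⊢
  have h3 : (inner ℝ (gradient h xplus) u : ℝ) - inner ℝ (gradient h xplus) xplus
      = inner ℝ (gradient h xplus) (u - xplus) := (inner_sub_right _ _ _).symm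
  have h4 : (inner ℝ (gradient h x) u : ℝ) - inner ℝ (gradient h x) xplus
      = inner ℝ (gradient h x) (u - xplus) := (inner_sub_right _ _ _).symm
  linarith [h3, h4]
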